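/- Let f : ℝ^d → ℝ be differentiable with an L-Lipschitz gradient (L > 0) and bounded below by f_inf, and let {Θ_t} satisfy Θ_{t+1} = Θ_t − α_t ∇f(Θ_t) with 0 < α_min ≤ α_t ≤ ᾱ < 2/L for all t. Then the squared gradient norms are summable, ∑_{t=0}^{∞} ‖∇f(Θ_t)‖² < ∞, and consequently ‖∇f(Θ_t)‖ → 0 as t → ∞. -/

import Mathlib

open Filter

theorem descent_lemma
    (d : ℕ) (f : EuclideanSpace ℝ (Fin d) → ℝ)
    (g : EuclideanSpace ℝ (Fin d) → EuclideanSpace ℝ (Fin d))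
    (L : ℝ) (hL : 0 < L)
    (hgrad : ∀ x, HasGradientAt f (g x) x)
    (hlip : ∀ x y, ‖g x - g y‖ ≤ L * ‖x - y‖)
    (x v : EuclideanSpace ℝ (Fin d)) :
    f (x + v) ≤ f x + inner ℝ (g x) v + L / 2 * ‖v‖ ^ 2 := by
  set φ : ℝ → ℝ := fun s => f (x + s • v) with hφ
  have hc : ∀ s : ℝ, HasDerivAt (fun s : ℝ => x + s • v) v s := by
    intro s
    simpa using ((hasDerivAt_id s).smul_const v).const_add x
  have hd : ∀ s : ℝ, HasDerivAt φ (inner ℝ (g (x + s • v)) v : ℝ) s := by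
    intro s
    have := ((hgrad (x + s • v)).hasFDerivAt).comp_hasDerivAt s (hc s)
    simp only [InnerProductSpace.toDual_apply_apply] at this
    exact this
  set ψ : ℝ → ℝ := fun s => f x + s * inner ℝ (g x) v + s ^ 2 * (L / 2 * ‖v‖ ^ 2) - φ s with hψ
  have hdψ : ∀ s : ℝ, HasDerivAt ψ
      (inner ℝ (g x) v + 2 * s * (L / 2 * ‖v‖ ^ 2) - inner ℝ (g (x + s • v)) v) s := by
    intro s
    have h1 : HasDerivAt (fun s : ℝ => f x + s * inner ℝ (g x) v + s ^ 2 * (L / 2 * ‖v‖ ^ 2))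
        (inner ℝ (g x) v + 2 * s * (L / 2 * ‖v‖ ^ 2)) s := by
      have := (((hasDerivAt_id s).mul_const (inner ℝ (g x) v : ℝ)).const_add (f x)).add
        (((hasDerivAt_pow 2 s)).mul_const (L / 2 * ‖v‖ ^ 2))
      simp [pow_one] at this
      exact this
    exact h1.sub (hd s)
  have hmono : MonotoneOn ψ (Set.Icc 0 1) := by
    apply monotoneOn_of_deriv_nonneg (convex_Icc 0 1)
    · exact fun s _ => ((hdψ s).continuousAt).continuousWithinAt
    · exact fun s _ => ((hdψ s).differentiableAt).differentiableWithinAt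
    · intro s hs
      rw [interior_Icc] at hs
      rw [(hdψ s).deriv]
      have key : inner ℝ (g (x + s • v)) v - inner ℝ (g x) v ≤ s * L * ‖v‖ ^ 2 := by
        have h1 : (inner ℝ (g (x + s • v)) v : ℝ) - inner ℝ (g x) v
            = inner ℝ (g (x + s • v) - g x) v := by rw [inner_sub_left]
        rw [h1]
        calc (inner ℝ (g (x + s • v) - g x) v : ℝ) ≤ ‖g (x + s • v) - g x‖ * ‖v‖ :=
              real_inner_le_norm _ _
          _ ≤ L * ‖x + s • v - x‖ * ‖v‖ := by
              have := hlip (x + s • v) x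
              nlinarith [norm_nonneg v]
          _ = s * L * ‖v‖ ^ 2 := by
              rw [add_sub_cancel_left, norm_smul, Real.norm_eq_abs,
                abs_of_pos hs.1]
              ring
      nlinarith
  have h01 : ψ 0 ≤ ψ 1 := hmono (by norm_num) (by norm_num) zero_le_one
  simp only [hψ, hφ] at h01
  simp only [zero_smul, add_zero, one_smul, zero_mul, one_mul, one_pow,
    zero_pow] at h01
  linarith

/-- **Summability of squared gradient norms and vanishing gradients.**
For the gradient iteration with `0 < αmin ≤ α t ≤ ᾱ < 2/L` on an `L`-smooth objective
bounded below, the squared gradient norms are summable and hence `‖g (Θ t)‖ → 0`. -/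
theorem grad_norms_summable_and_vanish
    (d : ℕ) (f : EuclideanSpace ℝ (Fin d) → ℝ)
    (g : EuclideanSpace ℝ (Fin d) → EuclideanSpace ℝ (Fin d))
    (L f_inf : ℝ) (hL : 0 < L)
    (hgrad : ∀ x, HasGradientAt f (g x) x)
    (hlip : ∀ x y, ‖g x - g y‖ ≤ L * ‖x - y‖)
    (hbdd : ∀ x, f_inf ≤ f x)
    (Θ : ℕ → EuclideanSpace ℝ (Fin d)) (α : ℕ → ℝ) (αmin ᾱ : ℝ)
    (hiter : ∀ t, Θ (t + 1) = Θ t - α t • g (Θ t))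
    (hαmin : 0 < αmin) (hlow : ∀ t, αmin ≤ α t) (hhigh : ∀ t, α t ≤ ᾱ)
    (hbar : ᾱ < 2 / L) :
    Summable (fun t => ‖g (Θ t)‖ ^ 2) ∧
      Tendsto (fun t => ‖g (Θ t)‖) atTop (nhds 0) := by
  set κ : ℝ := αmin * (1 - L / 2 * ᾱ) with hκ
  have hκpos : 0 < κ := by
    have h2 : ᾱ * L < 2 := by
      have := (lt_div_iff₀ hL).mp hbar
      linarith
    apply mul_pos hαmin
    nlinarith
  have hstep : ∀ t, f (Θ (t + 1)) ≤ f (Θ t) - κ * ‖g (Θ t)‖ ^ 2 := by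
    intro t
    have h := descent_lemma d f g L hL hgrad hlip (Θ t) (-(α t • g (Θ t)))
    have he : Θ t + -(α t • g (Θ t)) = Θ (t + 1) := by rw [hiter t]; abel
    rw [he] at h
    have hi : (inner ℝ (g (Θ t)) (-(α t • g (Θ t))) : ℝ) = -(α t * ‖g (Θ t)‖ ^ 2) := by
      rw [inner_neg_right, real_inner_smul_right, real_inner_self_eq_norm_sq]
    have hn : ‖-(α t • g (Θ t))‖ ^ 2 = α t ^ 2 * ‖g (Θ t)‖ ^ 2 := by
      rw [norm_neg, norm_smul, Real.norm_eq_abs, mul_pow, sq_abs]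
    rw [hi, hn] at h
    have hub : α t ≤ ᾱ := hhigh t
    have hlb : αmin ≤ α t := hlow t
    have hκt : κ ≤ α t * (1 - L / 2 * α t) := by
      have h1 : 1 - L / 2 * ᾱ ≤ 1 - L / 2 * α t := by nlinarith
      have h2 : 0 < 1 - L / 2 * ᾱ := by
        have := (lt_div_iff₀ hL).mp hbar
        nlinarith
      nlinarith
    nlinarith [sq_nonneg ‖g (Θ t)‖]
  have htel : ∀ n, κ * ∑ t ∈ Finset.range n, ‖g (Θ t)‖ ^ 2 ≤ f (Θ 0) - f (Θ n) := by
    intro n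
    induction n with
    | zero => simp
    | succ n ih =>
      rw [Finset.sum_range_succ, mul_add]
      have := hstep n
      linarith
  have hsum : Summable (fun t => ‖g (Θ t)‖ ^ 2) := by
    apply summable_of_sum_range_le (c := (f (Θ 0) - f_inf) / κ)
      (fun t => sq_nonneg _)
    intro n
    rw [le_div_iff₀ hκpos]
    have := htel n
    have := hbdd (Θ n)
    nlinarith
  refine ⟨hsum, ?_⟩
  have h2 : Tendsto (fun t => ‖g (Θ t)‖ ^ 2) atTop (nhds 0) := hsum.tendsto_atTop_zero
  have := (h2.sqrt)
  simpa [Real.sqrt_sq (norm_nonneg _)] using this
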